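/- arXiv:0711.2400 — 7 statements merged into one kernel-verified Lean document; each statement's English description precedes it below -/
import Mathlib

section
/- Let Ω be a set and C a nonempty collection of subsets of Ω, and let F = σ(C). If for every A ∈ C the complement A^c belongs to κ(C), then for every ω ∈ Ω the atom of F containing ω equals the intersection of all members of C containing ω: A_F(ω) = A_C(ω). -/
open MeasureTheory Classical

variable {Ω : Type*}

/-- The intersection of all members of `C` containing `ω`, with the convention
that it is `∅` when no member of `C` contains `ω`. -/
noncomputable def atomOf (C : Set (Set Ω)) (ω : Ω) : Set Ω :=
  if ∃ B ∈ C, ω ∈ B then ⋂₀ {B | B ∈ C ∧ ω ∈ B} else ∅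

/-- `C_σ` : the collection of all countable unions of members of `C`. -/
def sigmaUnions (C : Set (Set Ω)) : Set (Set Ω) :=
  {A | ∃ f : ℕ → Set Ω, (∀ n, f n ∈ C) ∧ A = ⋃ n, f n}

/-- `C_σδ` : the collection of all countable intersections of members of `C_σ`. -/
def sigmaDelta (C : Set (Set Ω)) : Set (Set Ω) :=
  {A | ∃ f : ℕ → Set Ω, (∀ n, f n ∈ sigmaUnions C) ∧ A = ⋂ n, f n}

/-- A κ class: closed under countable (nonempty) unions and intersections. -/
def IsKappaClass (K : Set (Set Ω)) : Prop :=
  (∀ f : ℕ → Set Ω, (∀ n, f n ∈ K) → (⋃ n, f n) ∈ K) ∧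
  (∀ f : ℕ → Set Ω, (∀ n, f n ∈ K) → (⋂ n, f n) ∈ K)

/-- `κ(C)` : the smallest κ class containing `C`. -/
def kappa (C : Set (Set Ω)) : Set (Set Ω) :=
  ⋂₀ {K | IsKappaClass K ∧ C ⊆ K}

/-- `σ(C)` viewed as the collection of its measurable sets. -/
def sigmaSets (C : Set (Set Ω)) : Set (Set Ω) :=
  {s | MeasurableSet[MeasurableSpace.generateFrom C] s}

lemma kappa_subset_of (C K : Set (Set Ω)) (hK : IsKappaClass K) (hCK : C ⊆ K) :
    kappa C ⊆ K :=
  Set.sInter_subset_of_mem ⟨hK, hCK⟩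

lemma kappa_subset_sUnion (C : Set (Set Ω)) : kappa C ⊆ {B | B ⊆ ⋃₀ C} := by
  apply kappa_subset_of
  · constructor
    · intro f hf
      exact Set.iUnion_subset hf
    · intro f hf
      exact (Set.iInter_subset f 0).trans (hf 0)
  · intro A hA
    exact Set.subset_sUnion_of_mem hA

lemma kappa_subset_mono (C : Set (Set Ω)) (ω ω' : Ω)
    (hωω' : ∀ A ∈ C, ω ∈ A → ω' ∈ A) :
    kappa C ⊆ {B | ω ∈ B → ω' ∈ B} := by
  apply kappa_subset_of
  · constructor
    · intro f hf hw
      rcases Set.mem_iUnion.1 hw with ⟨n, hn⟩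
      exact Set.mem_iUnion.2 ⟨n, hf n hn⟩
    · intro f hf hw
      exact Set.mem_iInter.2 fun n => hf n (Set.mem_iInter.1 hw n)
  · exact hωω'

theorem atom_eq_of_compl_mem_kappa (C : Set (Set Ω)) (hC : C.Nonempty)
    (h : ∀ A ∈ C, Aᶜ ∈ kappa C) (ω : Ω) :
    atomOf (sigmaSets C) ω = atomOf C ω := by
  -- every point of Ω lies in some member of C
  have hcover : ∀ x : Ω, ∃ B ∈ C, x ∈ B := by
    intro x
    obtain ⟨A, hA⟩ := hC
    by_cases hx : x ∈ A
    · exact ⟨A, hA, hx⟩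
    · have := kappa_subset_sUnion C (h A hA) hx
      rcases this with ⟨B, hB, hxB⟩
      exact ⟨B, hB, hxB⟩
  have hcoverF : ∃ B ∈ sigmaSets C, ω ∈ B :=
    ⟨Set.univ, MeasurableSet.univ (m := MeasurableSpace.generateFrom C), Set.mem_univ ω⟩
  rw [atomOf, atomOf, if_pos hcoverF, if_pos (hcover ω)]
  apply Set.Subset.antisymm
  · -- every C-set containing ω is a σ(C)-set containing ω
    apply Set.sInter_subset_sInter
    rintro B ⟨hB, hωB⟩
    exact ⟨MeasurableSpace.measurableSet_generateFrom hB, hωB⟩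
  · intro ω' hω'
    have key : ∀ A ∈ C, ω ∈ A → ω' ∈ A := fun A hA hωA =>
      Set.mem_sInter.1 hω' A ⟨hA, hωA⟩
    have keyiff : ∀ A ∈ C, (ω ∈ A ↔ ω' ∈ A) := by
      intro A hA
      constructor
      · exact key A hA
      · intro hω'A
        by_contra hωA
        have : ω' ∈ Aᶜ := kappa_subset_mono C ω ω' key (h A hA) hωA
        exact this hω'A
    -- the collection of sets where ω and ω' agree is a σ-algebra containing C
    let m : MeasurableSpace Ω :=
      { MeasurableSet' := fun s => ω ∈ s ↔ ω' ∈ s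
        measurableSet_empty := Iff.rfl
        measurableSet_compl := fun s hs => not_congr hs
        measurableSet_iUnion := fun f hf => by
          simp only [Set.mem_iUnion]
          exact exists_congr hf }
    have hle : MeasurableSpace.generateFrom C ≤ m :=
      MeasurableSpace.generateFrom_le keyiff
    intro B hB
    exact (hle B hB.1).1 hB.2
end

section
/- Let Ω be a set and C a semi-algebra on Ω (a set semi-ring with Ω ∈ C), and let F = σ(C). Then for every ω ∈ Ω, the atom of F containing ω equals the intersection of all members of C containing ω: A_F(ω) = A_C(ω). -/
open MeasureTheory Classical

variable {Ω : Type*}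

theorem atom_eq_of_semialgebra (C : Set (Set Ω)) (hC : IsSetSemiring C)
    (hΩ : (Set.univ : Set Ω) ∈ C) (ω : Ω) :
    atomOf (sigmaSets C) ω = atomOf C ω := by
  have hex : ∃ B ∈ C, ω ∈ B := ⟨Set.univ, hΩ, trivial⟩
  have hCsub : C ⊆ sigmaSets C := fun t ht => MeasurableSpace.measurableSet_generateFrom ht
  have hexF : ∃ B ∈ sigmaSets C, ω ∈ B := ⟨Set.univ, hCsub hΩ, trivial⟩
  rw [atomOf, atomOf, if_pos hex, if_pos hexF]
  set A := ⋂₀ {B | B ∈ C ∧ ω ∈ B} with hA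
  have hωA : ω ∈ A := fun B hB => hB.2
  -- key: for every measurable B, ω ∈ B → A ⊆ B, and ω ∉ B → A ∩ B = ∅
  have key : ∀ B, MeasurableSet[MeasurableSpace.generateFrom C] B →
      ((ω ∈ B → A ⊆ B) ∧ (ω ∉ B → A ⊆ Bᶜ)) := by
    intro B hB
    induction hB with
    | basic t ht =>
      constructor
      · intro hωt
        exact Set.sInter_subset_of_mem ⟨ht, hωt⟩
      · intro hωt
        have hdiff := hC.sUnion_disjointOfDiff hΩ ht
        have hωd : ω ∈ Set.univ \ t := ⟨trivial, hωt⟩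
        rw [← hdiff] at hωd
        obtain ⟨u, hu, hωu⟩ := Set.mem_sUnion.mp hωd
        have huC : u ∈ C := hC.subset_disjointOfDiff hΩ ht hu
        have : A ⊆ u := Set.sInter_subset_of_mem ⟨huC, hωu⟩
        intro x hx
        have hxu : x ∈ Set.univ \ t := by
          rw [← hdiff]; exact Set.mem_sUnion.mpr ⟨u, hu, this hx⟩
        exact hxu.2
    | empty =>
      exact ⟨fun h => absurd h (Set.notMem_empty ω), fun _ => by simp⟩
    | compl t _ ih =>
      exact ⟨fun h => ih.2 h, fun h => by simpa using ih.1 (by simpa using h)⟩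
    | iUnion f _ ih =>
      constructor
      · intro h
        obtain ⟨n, hn⟩ := Set.mem_iUnion.mp h
        exact ((ih n).1 hn).trans (Set.subset_iUnion f n)
      · intro h
        simp only [Set.mem_iUnion, not_exists] at h
        intro x hx
        simp only [Set.mem_compl_iff, Set.mem_iUnion, not_exists]
        exact fun n => (ih n).2 (h n) hx
  apply subset_antisymm
  · exact fun x hx => Set.mem_sInter.mpr fun B hB => Set.mem_sInter.mp hx B ⟨hCsub hB.1, hB.2⟩
  · intro x hx
    refine Set.mem_sInter.mpr fun B hB => ?_
    exact (key B hB.1).1 hB.2 hx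
end

section
/- Let Ω be a set and C a set semi-ring on Ω such that Ω is a countable union of members of C (i.e., Ω ∈ C_σ), and let F = σ(C). Then for every ω ∈ Ω, the atom of F containing ω equals the intersection of all members of C containing ω: A_F(ω) = A_C(ω). -/
open MeasureTheory Classical

variable {Ω : Type*}

theorem atom_eq_of_semiring_univ_sigma (C : Set (Set Ω)) (hC : IsSetSemiring C)
    (hΩ : (Set.univ : Set Ω) ∈ sigmaUnions C) (ω : Ω) :
    atomOf (sigmaSets C) ω = atomOf C ω := by
  -- ω belongs to some member of C
  obtain ⟨f, hf, hfu⟩ := hΩ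
  have hωu : ω ∈ ⋃ n, f n := by rw [← hfu]; trivial
  obtain ⟨n₀, hn₀⟩ := Set.mem_iUnion.mp hωu
  have hex : ∃ B ∈ C, ω ∈ B := ⟨f n₀, hf n₀, hn₀⟩
  set A : Set Ω := ⋂₀ {B | B ∈ C ∧ ω ∈ B} with hA
  have hAC : atomOf C ω = A := if_pos hex
  -- A avoids any B ∈ C not containing ω
  have hAsub : ∀ B ∈ C, ω ∈ B → A ⊆ B := fun B hB hωB => Set.sInter_subset_of_mem ⟨hB, hωB⟩
  have havoid : ∀ B ∈ C, ω ∉ B → A ⊆ Bᶜ := by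
    intro B hB hωB
    obtain ⟨I, hIC, _, hdiff⟩ := hC.sdiff_eq_sUnion' (f n₀) (hf n₀) B hB
    have hωd : ω ∈ ⋃₀ (I : Set (Set Ω)) := by rw [← hdiff]; exact ⟨hn₀, hωB⟩
    obtain ⟨D, hDI, hωD⟩ := hωd
    have : A ⊆ D := hAsub D (hIC hDI) hωD
    intro x hx
    have hxD : x ∈ D := this hx
    have : x ∈ f n₀ \ B := hdiff ▸ ⟨D, hDI, hxD⟩
    exact this.2
  -- the σ-algebra of sets "compatible" with A
  let m : MeasurableSpace Ω :=
    { MeasurableSet' := fun B => (ω ∈ B → A ⊆ B) ∧ (ω ∉ B → A ⊆ Bᶜ)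
      measurableSet_empty := ⟨fun h => absurd h (Set.notMem_empty ω),
        fun _ => by simp⟩
      measurableSet_compl := fun B ⟨h1, h2⟩ =>
        ⟨h2, fun h => by
          rw [compl_compl]
          exact h1 (not_not.mp h)⟩
      measurableSet_iUnion := fun g hg => by
        constructor
        · intro h
          obtain ⟨n, hn⟩ := Set.mem_iUnion.mp h
          exact ((hg n).1 hn).trans (Set.subset_iUnion g n)
        · intro h
          rw [Set.compl_iUnion]
          refine Set.subset_iInter fun n => (hg n).2 fun hn => h (Set.mem_iUnion.mpr ⟨n, hn⟩) }
  have hle : MeasurableSpace.generateFrom C ≤ m := by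
    refine MeasurableSpace.generateFrom_le fun B hB => ?_
    exact ⟨hAsub B hB, havoid B hB⟩
  have hexσ : ∃ B ∈ sigmaSets C, ω ∈ B := ⟨Set.univ, MeasurableSet.univ (m := MeasurableSpace.generateFrom C), trivial⟩
  rw [atomOf, if_pos hexσ, hAC]
  apply Set.Subset.antisymm
  · exact Set.sInter_subset_sInter fun B ⟨hB, hωB⟩ =>
      ⟨MeasurableSpace.measurableSet_generateFrom hB, hωB⟩
  · refine Set.subset_sInter fun B ⟨hB, hωB⟩ => ?_
    exact (hle B hB).1 hωB
end

section
/- Let Ω be a set and C a nonempty collection of subsets of Ω. Then κ(C) = σ(C) if and only if for every A ∈ C the complement A^c belongs to κ(C). -/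
open MeasureTheory Classical

variable {Ω : Type*}

lemma subset_kappa (C : Set (Set Ω)) : C ⊆ kappa C := fun A hA K hK => hK.2 hA

lemma isKappaClass_kappa (C : Set (Set Ω)) : IsKappaClass (kappa C) := by
  constructor
  · intro f hf K hK
    exact hK.1.1 f fun n => hf n K hK
  · intro f hf K hK
    exact hK.1.2 f fun n => hf n K hK

lemma kappa_subset {C K : Set (Set Ω)} (hK : IsKappaClass K) (hCK : C ⊆ K) :
    kappa C ⊆ K := fun A hA => hA K ⟨hK, hCK⟩

lemma isKappaClass_sigmaSets (C : Set (Set Ω)) : IsKappaClass (sigmaSets C) := by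
  constructor
  · intro f hf
    exact MeasurableSet.iUnion (m := MeasurableSpace.generateFrom C) hf
  · intro f hf
    exact MeasurableSet.iInter (m := MeasurableSpace.generateFrom C) hf

lemma compl_mem_kappa {C : Set (Set Ω)} (h : ∀ A ∈ C, Aᶜ ∈ kappa C) :
    ∀ s ∈ kappa C, sᶜ ∈ kappa C := by
  have : kappa C ⊆ {A | A ∈ kappa C ∧ Aᶜ ∈ kappa C} := by
    apply kappa_subset
    · constructor
      · intro f hf
        refine ⟨(isKappaClass_kappa C).1 f fun n => (hf n).1, ?_⟩
        rw [Set.compl_iUnion]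
        exact (isKappaClass_kappa C).2 _ fun n => (hf n).2
      · intro f hf
        refine ⟨(isKappaClass_kappa C).2 f fun n => (hf n).1, ?_⟩
        rw [Set.compl_iInter]
        exact (isKappaClass_kappa C).1 _ fun n => (hf n).2
    · exact fun A hA => ⟨subset_kappa C hA, h A hA⟩
  exact fun s hs => (this hs).2

theorem kappa_eq_sigma_iff (C : Set (Set Ω)) (hC : C.Nonempty) :
    kappa C = sigmaSets C ↔ ∀ A ∈ C, Aᶜ ∈ kappa C := by
  constructor
  · intro h A hA
    rw [h]
    exact (MeasurableSpace.measurableSet_generateFrom hA).compl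
  · intro h
    apply Set.Subset.antisymm
    · exact kappa_subset (isKappaClass_sigmaSets C)
        (fun A hA => MeasurableSpace.measurableSet_generateFrom hA)
    · obtain ⟨A, hA⟩ := hC
      have hAk : A ∈ kappa C := subset_kappa C hA
      have hAc : Aᶜ ∈ kappa C := h A hA
      have hUniv : (Set.univ : Set Ω) ∈ kappa C := by
        have := (isKappaClass_kappa C).1 (fun n => if n = 0 then A else Aᶜ)
          (fun n => by by_cases hn : n = 0 <;> simp [hn, hAk, hAc])
        have heq : (⋃ n, if n = 0 then A else Aᶜ) = Set.univ := by
          ext x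
          simp only [Set.mem_iUnion, Set.mem_univ, iff_true]
          by_cases hx : x ∈ A
          · exact ⟨0, by simp [hx]⟩
          · exact ⟨1, by simp [hx]⟩
        rwa [heq] at this
      have hEmpty : (∅ : Set Ω) ∈ kappa C := by
        have := compl_mem_kappa h _ hUniv
        simpa using this
      intro s hs
      induction hs with
      | basic t ht => exact subset_kappa C ht
      | empty => exact hEmpty
      | compl t _ ih => exact compl_mem_kappa h t ih
      | iUnion f _ ih => exact (isKappaClass_kappa C).1 f ih
end

section
/- Let Ω be a set and C a collection of subsets of Ω with κ(C) = σ(C), and let F = σ(C). Then for every ω ∈ Ω, the atom of F containing ω equals the intersection of all members of C containing ω: A_F(ω) = A_C(ω). -/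
open MeasureTheory Classical

variable {Ω : Type*}

theorem atom_eq_of_kappa_eq_sigma (C : Set (Set Ω)) (h : kappa C = sigmaSets C) (ω : Ω) :
    atomOf (sigmaSets C) ω = atomOf C ω := by
  have hC : C ⊆ sigmaSets C := fun B hB => MeasurableSpace.measurableSet_generateFrom hB
  have hunivF : (Set.univ : Set Ω) ∈ sigmaSets C := @MeasurableSet.univ Ω (MeasurableSpace.generateFrom C)
  by_cases hω : ∃ B ∈ C, ω ∈ B
  · have hKclass : IsKappaClass {B : Set Ω | ω ∈ B → atomOf C ω ⊆ B} ∧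
        C ⊆ {B : Set Ω | ω ∈ B → atomOf C ω ⊆ B} := by
      refine ⟨⟨?_, ?_⟩, ?_⟩
      · intro f hf hmem
        obtain ⟨n, hn⟩ := Set.mem_iUnion.mp hmem
        exact (hf n hn).trans (Set.subset_iUnion f n)
      · intro f hf hmem
        exact Set.subset_iInter fun n => hf n (Set.mem_iInter.mp hmem n)
      · intro B hB hmemB
        rw [atomOf, if_pos hω]
        exact Set.sInter_subset_of_mem ⟨hB, hmemB⟩
    have hsub : sigmaSets C ⊆ {B : Set Ω | ω ∈ B → atomOf C ω ⊆ B} := by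
      rw [← h]
      exact Set.sInter_subset_of_mem hKclass
    have hωF : ∃ B ∈ sigmaSets C, ω ∈ B := by
      obtain ⟨B, hB, hmem⟩ := hω
      exact ⟨B, hC hB, hmem⟩
    rw [atomOf, atomOf, if_pos hω, if_pos hωF]
    apply subset_antisymm
    · exact Set.sInter_subset_sInter (fun B hB => ⟨hC hB.1, hB.2⟩)
    · intro x hx
      intro B hB
      have := hsub hB.1 hB.2
      rw [atomOf, if_pos hω] at this
      exact this hx
  · exfalso
    have hKclass : IsKappaClass {B : Set Ω | ω ∉ B} ∧ C ⊆ {B : Set Ω | ω ∉ B} := by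
      refine ⟨⟨?_, ?_⟩, ?_⟩
      · intro f hf hmem
        obtain ⟨n, hn⟩ := Set.mem_iUnion.mp hmem
        exact hf n hn
      · intro f hf hmem
        exact hf 0 (Set.mem_iInter.mp hmem 0)
      · intro B hB hmemB
        exact hω ⟨B, hB, hmemB⟩
    have hsub : sigmaSets C ⊆ {B : Set Ω | ω ∉ B} := by
      rw [← h]
      exact Set.sInter_subset_of_mem hKclass
    exact hsub hunivF (Set.mem_univ ω)
end

section
/- Let Ω be a set and C a countable set semi-ring on Ω, and let F = σ(C). Then A_F(ω) = A_C(ω) for every ω ∈ Ω if and only if Ω is a countable union of members of C (i.e., Ω ∈ C_σ). -/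
open MeasureTheory Classical

variable {Ω : Type*}

lemma mem_atomOf_self {C : Set (Set Ω)} {ω : Ω} (h : ∃ B ∈ C, ω ∈ B) :
    ω ∈ atomOf C ω := by
  rw [atomOf, if_pos h]
  exact fun B hB => hB.2

lemma atomOf_subset {C : Set (Set Ω)} {ω : Ω} {B : Set Ω} (hB : B ∈ C) (hω : ω ∈ B) :
    atomOf C ω ⊆ B := by
  rw [atomOf, if_pos ⟨B, hB, hω⟩]
  exact Set.sInter_subset_of_mem ⟨hB, hω⟩

/-- If `ω` lies in some member of the semiring and `B ∈ C` does not contain `ω`,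
then the atom of `ω` is disjoint from `B`. -/
lemma atomOf_disjoint {C : Set (Set Ω)} (hC : IsSetSemiring C) {ω : Ω}
    (h : ∃ B ∈ C, ω ∈ B) {B : Set Ω} (hB : B ∈ C) (hω : ω ∉ B) :
    atomOf C ω ∩ B = ∅ := by
  obtain ⟨E, hE, hωE⟩ := h
  obtain ⟨I, hIC, -, hdiff⟩ := hC.sdiff_eq_sUnion' E hE B hB
  have hωD : ω ∈ ⋃₀ (I : Set (Set Ω)) := by
    rw [← hdiff]; exact ⟨hωE, hω⟩
  obtain ⟨D, hDI, hωD⟩ := hωD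
  have hDC : D ∈ C := hIC hDI
  have hsub : atomOf C ω ⊆ D := atomOf_subset hDC hωD
  have hDB : D ∩ B = ∅ := by
    have : D ⊆ E \ B := hdiff ▸ Set.subset_sUnion_of_mem hDI
    ext x; simp only [Set.mem_inter_iff, Set.mem_empty_iff_false, iff_false]
    rintro ⟨hxD, hxB⟩; exact (this hxD).2 hxB
  have : atomOf C ω ∩ B ⊆ D ∩ B := Set.inter_subset_inter_left B hsub
  exact Set.subset_empty_iff.mp (hDB ▸ this)

lemma atomOf_subset_measurable {C : Set (Set Ω)} (hC : IsSetSemiring C) {ω : Ω}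
    (h : ∃ B ∈ C, ω ∈ B) {B : Set Ω} (hB : B ∈ sigmaSets C) (hω : ω ∈ B) :
    atomOf C ω ⊆ B := by
  set A := atomOf C ω with hA
  -- the collection of sets which either contain A or are disjoint from A is a σ-algebra
  let m : MeasurableSpace Ω :=
    { MeasurableSet' := fun s => A ⊆ s ∨ A ∩ s = ∅
      measurableSet_empty := Or.inr (Set.inter_empty A)
      measurableSet_compl := by
        rintro s (hs | hs)
        · right
          ext x; simp only [Set.mem_inter_iff, Set.mem_compl_iff, Set.mem_empty_iff_false,
            iff_false]
          rintro ⟨hxA, hxs⟩; exact hxs (hs hxA)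
        · left
          intro x hxA hxs
          have : x ∈ A ∩ s := ⟨hxA, hxs⟩
          simp [hs] at this
      measurableSet_iUnion := by
        intro f hf
        by_cases hex : ∃ n, A ⊆ f n
        · obtain ⟨n, hn⟩ := hex
          exact Or.inl (hn.trans (Set.subset_iUnion f n))
        · push_neg at hex
          right
          ext x; simp only [Set.mem_inter_iff, Set.mem_iUnion, Set.mem_empty_iff_false,
            iff_false, not_and, not_exists]
          intro hxA n hxf
          rcases hf n with h1 | h2
          · exact hex n h1
          · have : x ∈ A ∩ f n := ⟨hxA, hxf⟩
            simp [h2] at this }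
  have hle : MeasurableSpace.generateFrom C ≤ m := by
    apply MeasurableSpace.generateFrom_le
    intro t ht
    by_cases hωt : ω ∈ t
    · exact Or.inl (atomOf_subset ht hωt)
    · exact Or.inr (atomOf_disjoint hC h ht hωt)
  have hB' : A ⊆ B ∨ A ∩ B = ∅ := hle B hB
  rcases hB' with h1 | h2
  · exact h1
  · exfalso
    have : ω ∈ A ∩ B := ⟨mem_atomOf_self h, hω⟩
    simp [h2] at this

theorem atom_eq_iff_univ_mem_sigmaUnions (C : Set (Set Ω)) (hC : IsSetSemiring C)
    (hcount : C.Countable) :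
    (∀ ω : Ω, atomOf (sigmaSets C) ω = atomOf C ω) ↔ (Set.univ : Set Ω) ∈ sigmaUnions C := by
  have huniv : (Set.univ : Set Ω) ∈ sigmaSets C := @MeasurableSet.univ _ (MeasurableSpace.generateFrom C)
  constructor
  · intro h
    -- every ω lies in some member of C
    have hcov : ∀ ω : Ω, ∃ B ∈ C, ω ∈ B := by
      intro ω
      by_contra hn
      have hω : ω ∈ atomOf (sigmaSets C) ω :=
        mem_atomOf_self ⟨Set.univ, huniv, Set.mem_univ ω⟩
      rw [h ω, atomOf, if_neg hn] at hω
      exact hω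
    obtain ⟨f, hf⟩ := (Set.Countable.exists_eq_range hcount ⟨∅, hC.empty_mem⟩)
    refine ⟨f, ?_, ?_⟩
    · intro n; rw [hf]; exact ⟨n, rfl⟩
    · ext x
      simp only [Set.mem_univ, true_iff, Set.mem_iUnion]
      obtain ⟨B, hB, hxB⟩ := hcov x
      rw [hf] at hB
      obtain ⟨n, rfl⟩ := hB
      exact ⟨n, hxB⟩
  · intro ⟨f, hfC, hfu⟩
    intro ω
    have h : ∃ B ∈ C, ω ∈ B := by
      have : ω ∈ ⋃ n, f n := hfu ▸ Set.mem_univ ω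
      obtain ⟨n, hn⟩ := Set.mem_iUnion.mp this
      exact ⟨f n, hfC n, hn⟩
    have hF : ∃ B ∈ sigmaSets C, ω ∈ B := ⟨Set.univ, huniv, Set.mem_univ ω⟩
    apply Set.Subset.antisymm
    · -- each B ∈ C is measurable, so the F-atom is contained in each
      conv_rhs => rw [atomOf, if_pos h]
      refine Set.subset_sInter fun B hB => ?_
      exact atomOf_subset (MeasurableSpace.measurableSet_generateFrom hB.1 : B ∈ sigmaSets C) hB.2
    · conv_rhs => rw [atomOf, if_pos hF]
      exact Set.subset_sInter fun B hB => atomOf_subset_measurable hC h hB.1 hB.2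
end

section
/- Let C = {{x} : x ∈ ℝ} be the collection of all singleton subsets of ℝ. Then every member of κ(C) is a countable set; in particular, ℝ \ {0} ∉ κ(C), even though ℝ \ {0} ∈ σ(C). Hence the condition 'A^c ∈ κ(C) for every A ∈ C' fails for this C, although A_F(x) = A_C(x) for every x ∈ ℝ; that is, this condition is not necessary for the atoms of σ(C) to be given by intersections over the generator. -/
open MeasureTheory Classical

variable {Ω : Type*}

lemma kappa_subset_countable :
    kappa {s : Set ℝ | ∃ y : ℝ, s = {y}} ⊆ {A : Set ℝ | A.Countable} := by
  intro A hA
  exact hA {A : Set ℝ | A.Countable}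
    ⟨⟨fun f hf => Set.countable_iUnion hf,
      fun f hf => (hf 0).mono (Set.iInter_subset f 0)⟩,
     by rintro s ⟨y, rfl⟩; exact Set.countable_singleton y⟩

lemma compl_zero_not_mem :
    {(0 : ℝ)}ᶜ ∉ kappa {s : Set ℝ | ∃ y : ℝ, s = {y}} := by
  intro h
  have := kappa_subset_countable h
  have : ¬ ({(0:ℝ)}ᶜ : Set ℝ).Countable := by
    intro hc
    have : (Set.univ : Set ℝ).Countable := by
      have h2 : (Set.univ : Set ℝ) = {(0:ℝ)}ᶜ ∪ {(0:ℝ)} := by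
        ext z; simp [eq_or_ne z 0]
      rw [h2]
      exact hc.union (Set.countable_singleton 0)
    exact Cardinal.not_countable_real this
  exact this ‹_›

lemma singleton_mem_sigmaSets (x : ℝ) :
    {x} ∈ sigmaSets {s : Set ℝ | ∃ y : ℝ, s = {y}} :=
  MeasurableSpace.measurableSet_generateFrom ⟨x, rfl⟩

theorem kappa_singletons_countable_not_necessary :
    (∀ A ∈ kappa {s : Set ℝ | ∃ y : ℝ, s = {y}}, A.Countable) ∧
    ({(0 : ℝ)}ᶜ ∉ kappa {s : Set ℝ | ∃ y : ℝ, s = {y}}) ∧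
    ({(0 : ℝ)}ᶜ ∈ sigmaSets {s : Set ℝ | ∃ y : ℝ, s = {y}}) ∧
    ¬ (∀ A ∈ {s : Set ℝ | ∃ y : ℝ, s = {y}}, Aᶜ ∈ kappa {s : Set ℝ | ∃ y : ℝ, s = {y}}) ∧
    (∀ x : ℝ, atomOf (sigmaSets {s : Set ℝ | ∃ y : ℝ, s = {y}}) x =
      atomOf {s : Set ℝ | ∃ y : ℝ, s = {y}} x) := by
  refine ⟨fun A hA => kappa_subset_countable hA, compl_zero_not_mem,
    MeasurableSet.compl (m := MeasurableSpace.generateFrom {s : Set ℝ | ∃ y : ℝ, s = {y}}) (singleton_mem_sigmaSets 0), ?_, ?_⟩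
  · intro h
    exact compl_zero_not_mem (h {(0:ℝ)} ⟨0, rfl⟩)
  · intro x
    have hC : atomOf {s : Set ℝ | ∃ y : ℝ, s = {y}} x = {x} := by
      rw [atomOf, if_pos ⟨{x}, ⟨x, rfl⟩, rfl⟩]
      apply subset_antisymm
      · exact Set.sInter_subset_of_mem ⟨⟨x, rfl⟩, rfl⟩
      · rintro z rfl B ⟨⟨y, rfl⟩, hx⟩
        simpa using hx
    have hF : atomOf (sigmaSets {s : Set ℝ | ∃ y : ℝ, s = {y}}) x = {x} := by
      rw [atomOf, if_pos ⟨{x}, singleton_mem_sigmaSets x, rfl⟩]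
      apply subset_antisymm
      · exact Set.sInter_subset_of_mem ⟨singleton_mem_sigmaSets x, rfl⟩
      · rintro z rfl B ⟨_, hx⟩
        exact hx
    rw [hC, hF]
end
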